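/- (Summability lemma, finiteness part) For the sequence a_j = j, the sum S((j)) is finite; indeed S((j)) ≤ #{n ∈ ℤ^d : λ⁻¹|n| ≤ c₂} + Σ_{n ∈ ℤ^d, λ⁻¹|n| > c₂} ( 1/(C(λ⁻¹|n| − c₁)^d) − 1/(C(λ⁻¹|n| + 1 + c₁)^d) ) < ∞. Consequently S((a_j)) < ∞ for every strictly increasing integer sequence (a_j)_{j∈ℤ}. -/

import Mathlib

open scoped BigOperators ENNReal

noncomputable section

/-- The truncated expression `C(x)₊^d = max{C (max{x,0})^d, 1}`. -/
def Cplus (C : ℝ) (d : ℕ) (x : ℝ) : ℝ := max (C * (max x 0) ^ d) 1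

/-- The Euclidean norm of a lattice point `n' ∈ ℤ^k`. -/
def latNorm (k : ℕ) (n' : Fin k → ℤ) : ℝ := Real.sqrt (∑ i, ((n' i : ℝ)) ^ 2)

/-- The summand of the double series `S((a_j))`, indexed by `n' ∈ ℤ^{d-1}` and `j ∈ ℤ`. -/
def Sterm (d : ℕ) (C c₁ lam c₂ : ℝ) (a : ℤ → ℤ) (n' : Fin (d - 1) → ℤ) (j : ℤ) : ℝ :=
  (Cplus C d (lam⁻¹ * Real.sqrt ((latNorm (d - 1) n') ^ 2 + ((a j : ℝ)) ^ 2) - c₁))⁻¹ -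
    min ((C * (c₂ + ((a j : ℝ) - (a (j - 1) : ℝ)) + c₁) ^ d)⁻¹)
      ((C * (lam⁻¹ * Real.sqrt ((latNorm (d - 1) n') ^ 2 + ((a j : ℝ)) ^ 2) +
        ((a j : ℝ) - (a (j - 1) : ℝ)) + c₁) ^ d)⁻¹)

/-- The double series `S((a_j))`, valued in `[0,∞]`. -/
def Ssum (d : ℕ) (C c₁ lam c₂ : ℝ) (a : ℤ → ℤ) : ℝ≥0∞ :=
  ∑' p : (Fin (d - 1) → ℤ) × ℤ, ENNReal.ofReal (Sterm d C c₁ lam c₂ a p.1 p.2)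

namespace SP

/-! ### The auxiliary function `psi` -/

def psi (C : ℝ) (d : ℕ) (y : ℝ) : ℝ := (C * y ^ d)⁻¹

lemma psi_pos {C : ℝ} (hC : 0 < C) (d : ℕ) {y : ℝ} (hy : 0 < y) : 0 < psi C d y := by
  unfold psi; positivity

lemma psi_anti {C : ℝ} (hC : 0 < C) (d : ℕ) {y z : ℝ} (hy : 0 < y) (hyz : y ≤ z) :
    psi C d z ≤ psi C d y := by
  unfold psi
  exact inv_anti₀ (by positivity)
    (mul_le_mul_of_nonneg_left (pow_le_pow_left₀ hy.le hyz d) hC.le)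

lemma psi_diff_eq {C : ℝ} (hC : 0 < C) (d : ℕ) {x s : ℝ} (hx : 0 < x) (hs : 0 ≤ s) :
    psi C d x - psi C d (x + s) =
      s * ∑ i ∈ Finset.range d, (C * ((x + s) ^ (d - i) * x ^ (i + 1)))⁻¹ := by
  have hxs : 0 < x + s := by linarith
  have key : (∑ i ∈ Finset.range d, (x+s) ^ i * x ^ (d - 1 - i)) * s = (x+s) ^ d - x ^ d := by
    simpa using geom_sum₂_mul (x + s) x d
  have h1 : psi C d x - psi C d (x + s) = ((x+s)^d - x^d) * (C * (x^d * (x+s)^d))⁻¹ := by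
    unfold psi
    field_simp
  rw [h1, ← key, Finset.sum_mul, Finset.sum_mul, Finset.mul_sum]
  apply Finset.sum_congr rfl
  intro i hi
  have hid : i < d := Finset.mem_range.mp hi
  have e1 : x ^ d = x ^ (d - 1 - i) * x ^ (i + 1) := by
    rw [← pow_add]; congr 1; omega
  have e2 : (x + s) ^ d = (x + s) ^ i * (x + s) ^ (d - i) := by
    rw [← pow_add]; congr 1; omega
  rw [e1, e2]
  field_simp

lemma psi_diff_anti {C : ℝ} (hC : 0 < C) (d : ℕ) {x y s : ℝ} (hy : 0 < y) (hyx : y ≤ x)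
    (hs : 0 ≤ s) :
    psi C d x - psi C d (x + s) ≤ psi C d y - psi C d (y + s) := by
  rw [psi_diff_eq hC d (hy.trans_le hyx) hs, psi_diff_eq hC d hy hs]
  apply mul_le_mul_of_nonneg_left _ hs
  apply Finset.sum_le_sum
  intro i hi
  apply inv_anti₀ (by positivity)
  apply mul_le_mul_of_nonneg_left _ hC.le
  apply mul_le_mul
  · exact pow_le_pow_left₀ (by linarith) (by linarith) _
  · exact pow_le_pow_left₀ hy.le hyx _
  · exact pow_nonneg (by linarith) _
  · exact pow_nonneg (by linarith) _

lemma psi_diff_nonneg {C : ℝ} (hC : 0 < C) (d : ℕ) {x s : ℝ} (hx : 0 < x) (hs : 0 ≤ s) :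
    0 ≤ psi C d x - psi C d (x + s) := by
  have := psi_anti hC d hx (by linarith : x ≤ x + s)
  linarith

lemma psi_diff_le {C : ℝ} (hC : 0 < C) (d : ℕ) {x s : ℝ} (hx : 0 < x) (hs : 0 ≤ s) :
    psi C d x - psi C d (x + s) ≤ s * d * (C * x ^ (d + 1))⁻¹ := by
  rw [psi_diff_eq hC d hx hs, mul_assoc]
  apply mul_le_mul_of_nonneg_left _ hs
  calc ∑ i ∈ Finset.range d, (C * ((x + s) ^ (d - i) * x ^ (i + 1)))⁻¹
      ≤ ∑ _i ∈ Finset.range d, (C * x ^ (d + 1))⁻¹ := by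
        apply Finset.sum_le_sum
        intro i hi
        have hid : i < d := Finset.mem_range.mp hi
        apply inv_anti₀ (by positivity)
        apply mul_le_mul_of_nonneg_left _ hC.le
        calc x ^ (d+1) = x ^ (d - i) * x ^ (i+1) := by rw [← pow_add]; congr 1; omega
          _ ≤ (x + s) ^ (d - i) * x ^ (i + 1) := by
              apply mul_le_mul_of_nonneg_right (pow_le_pow_left₀ hx.le (by linarith) _)
              positivity
    _ = d * (C * x ^ (d + 1))⁻¹ := by simp [Finset.sum_const, nsmul_eq_mul]

/-! ### Rewriting `Sterm` in terms of `psi` -/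

lemma Sterm_eq {d : ℕ} {C c₁ lam c₂ : ℝ} (hC : 0 < C) (hc₁ : 0 ≤ c₁) (hlam : 1 ≤ lam)
    (hc₂ : c₁ < c₂) (hc₂def : C * (c₂ - c₁) ^ d = 1)
    (a : ℤ → ℤ) (n' : Fin (d - 1) → ℤ) (j : ℤ) (hg : 1 ≤ (a j : ℝ) - (a (j - 1) : ℝ)) :
    Sterm d C c₁ lam c₂ a n' j =
      psi C d (max (lam⁻¹ * Real.sqrt ((latNorm (d - 1) n') ^ 2 + ((a j : ℝ)) ^ 2)) c₂ - c₁) -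
      psi C d (max (lam⁻¹ * Real.sqrt ((latNorm (d - 1) n') ^ 2 + ((a j : ℝ)) ^ 2)) c₂ - c₁ +
        (((a j : ℝ) - (a (j - 1) : ℝ)) + 2 * c₁)) := by
  unfold Sterm
  set r := lam⁻¹ * Real.sqrt ((latNorm (d - 1) n') ^ 2 + ((a j : ℝ)) ^ 2) with hr
  set g := (a j : ℝ) - (a (j - 1) : ℝ) with hgdef
  have hlam0 : (0:ℝ) < lam := by linarith
  have hrpos : 0 ≤ r := mul_nonneg (inv_nonneg.mpr hlam0.le) (Real.sqrt_nonneg _)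
  have hc₂0 : 0 < c₂ := lt_of_le_of_lt hc₁ hc₂
  have part1 : (Cplus C d (r - c₁))⁻¹ = psi C d (max r c₂ - c₁) := by
    unfold Cplus psi
    rcases le_or_gt r c₂ with h | h
    · rw [max_eq_right h]
      have h1 : max (r - c₁) 0 ≤ c₂ - c₁ := max_le (by linarith) (by linarith)
      have h2 : C * max (r - c₁) 0 ^ d ≤ 1 := by
        rw [← hc₂def]
        exact mul_le_mul_of_nonneg_left (pow_le_pow_left₀ (le_max_right _ _) h1 d) hC.le
      rw [max_eq_right h2, hc₂def]
    · rw [max_eq_left h.le]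
      have h0 : max (r - c₁) 0 = r - c₁ := max_eq_left (by linarith)
      have h2 : (1:ℝ) ≤ C * max (r - c₁) 0 ^ d := by
        rw [h0, ← hc₂def]
        exact mul_le_mul_of_nonneg_left (pow_le_pow_left₀ (by linarith) (by linarith) d) hC.le
      rw [max_eq_left h2, h0]
  have part2 : min ((C * (c₂ + g + c₁) ^ d)⁻¹) ((C * (r + g + c₁) ^ d)⁻¹)
      = psi C d (max r c₂ + g + c₁) := by
    rcases le_total r c₂ with h | h
    · rw [max_eq_right h, min_eq_left]
      · rfl
      · have := psi_anti hC d (show (0:ℝ) < r + g + c₁ by linarith)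
          (show r + g + c₁ ≤ c₂ + g + c₁ by linarith)
        simpa [psi] using this
    · rw [max_eq_left h, min_eq_right]
      · rfl
      · have := psi_anti hC d (show (0:ℝ) < c₂ + g + c₁ by linarith)
          (show c₂ + g + c₁ ≤ r + g + c₁ by linarith)
        simpa [psi] using this
  rw [part1, part2]
  congr 1
  congr 1
  ring

lemma Sterm_nonneg {d : ℕ} {C c₁ lam c₂ : ℝ} (hC : 0 < C) (hc₁ : 0 ≤ c₁) (hlam : 1 ≤ lam)
    (hc₂ : c₁ < c₂) (hc₂def : C * (c₂ - c₁) ^ d = 1)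
    (a : ℤ → ℤ) (n' : Fin (d - 1) → ℤ) (j : ℤ) (hg : 1 ≤ (a j : ℝ) - (a (j - 1) : ℝ)) :
    0 ≤ Sterm d C c₁ lam c₂ a n' j := by
  rw [Sterm_eq hC hc₁ hlam hc₂ hc₂def a n' j hg]
  have hx : (0:ℝ) < max (lam⁻¹ * Real.sqrt ((latNorm (d - 1) n') ^ 2 + ((a j : ℝ)) ^ 2)) c₂ - c₁ := by
    have := le_max_right (lam⁻¹ * Real.sqrt ((latNorm (d - 1) n') ^ 2 + ((a j : ℝ)) ^ 2)) c₂
    linarith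
  exact psi_diff_nonneg hC d hx (by linarith)

lemma Sterm_id_eq {d : ℕ} {C c₁ lam c₂ : ℝ} (hC : 0 < C) (hc₁ : 0 ≤ c₁) (hlam : 1 ≤ lam)
    (hc₂ : c₁ < c₂) (hc₂def : C * (c₂ - c₁) ^ d = 1)
    (n' : Fin (d - 1) → ℤ) (m : ℤ) :
    Sterm d C c₁ lam c₂ (fun i => i) n' m =
      psi C d (max (lam⁻¹ * Real.sqrt ((latNorm (d - 1) n') ^ 2 + ((m : ℝ)) ^ 2)) c₂ - c₁) -
      psi C d (max (lam⁻¹ * Real.sqrt ((latNorm (d - 1) n') ^ 2 + ((m : ℝ)) ^ 2)) c₂ - c₁ +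
        (1 + 2 * c₁)) := by
  have hg : (1:ℝ) ≤ (((fun i => i) m : ℤ) : ℝ) - (((fun i => i) (m - 1) : ℤ) : ℝ) := by
    push_cast; norm_num
  have h := Sterm_eq hC hc₁ hlam hc₂ hc₂def (fun i => i) n' m hg
  rw [h]
  have e : ((m:ℝ) - ((m - 1 : ℤ) : ℝ)) = 1 := by push_cast; ring
  rw [e]

/-! ### Summability of the majorant over the lattice -/

lemma summable_base {p : ℝ} (hp : 1 < p) :
    Summable fun t : ℤ => ((1:ℝ) + |(t:ℝ)|) ^ (-p) := by
  have h0 : Summable fun n : ℕ => ((n:ℝ)) ^ (-p) := Real.summable_nat_rpow.mpr (by linarith)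
  have h1 : Summable fun n : ℕ => (((n + 1 : ℕ)):ℝ) ^ (-p) :=
    h0.comp_injective Nat.succ_injective
  rw [summable_int_iff_summable_nat_and_neg]
  constructor
  · apply h1.congr
    intro n
    congr 1
    push_cast
    rw [abs_of_nonneg (by positivity)]
    ring
  · apply h1.congr
    intro n
    congr 1
    push_cast
    rw [abs_neg, abs_of_nonneg (by positivity)]
    ring

lemma summable_prod_pow {p : ℝ} (hp : 1 < p) (m : ℕ) :
    Summable fun v : Fin m → ℤ => ∏ i, ((1:ℝ) + |(v i : ℝ)|) ^ (-p) := by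
  induction m with
  | zero => exact Summable.of_finite
  | succ m ih =>
    rw [← (Fin.consEquiv (fun _ : Fin (m+1) => ℤ)).summable_iff]
    apply Summable.congr ((summable_base hp).mul_of_nonneg ih
      (fun t => by positivity) (fun v => by positivity))
    intro q
    show _ = ∏ i, ((1:ℝ) + |((Fin.cons q.1 q.2 : Fin (m+1) → ℤ) i : ℝ)|) ^ (-p)
    rw [Fin.prod_univ_succ]
    simp

/-! ### Geometric facts -/

lemma sqrt_add_le {A b t : ℝ} (hA : 0 ≤ A) (hb : 0 ≤ b) (ht : 0 ≤ t) :
    Real.sqrt (A + (b + t) ^ 2) ≤ Real.sqrt (A + b ^ 2) + t := by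
  have hb' : b ≤ Real.sqrt (A + b ^ 2) := by
    have h := Real.sqrt_le_sqrt (show b ^ 2 ≤ A + b ^ 2 by linarith)
    rwa [Real.sqrt_sq hb] at h
  have hs : Real.sqrt (A + b ^ 2) ^ 2 = A + b ^ 2 := Real.sq_sqrt (by positivity)
  have h2 : A + (b + t) ^ 2 ≤ (Real.sqrt (A + b ^ 2) + t) ^ 2 := by nlinarith
  calc Real.sqrt (A + (b + t) ^ 2) ≤ Real.sqrt ((Real.sqrt (A + b ^ 2) + t) ^ 2) :=
        Real.sqrt_le_sqrt h2
    _ = Real.sqrt (A + b ^ 2) + t := Real.sqrt_sq (by positivity)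

/-- Lipschitz-type estimate for `t ↦ max (lam⁻¹ √(A + t²)) c₂ - c₁`. -/
lemma Lv_le {lam c₂ c₁ A : ℝ} (hlam : 1 ≤ lam) (hA : 0 ≤ A) (t k : ℝ) (hk : 0 ≤ k) :
    max (lam⁻¹ * Real.sqrt (A + (t - k) ^ 2)) c₂ - c₁ ≤
      (max (lam⁻¹ * Real.sqrt (A + t ^ 2)) c₂ - c₁) + k := by
  have hlam0 : (0:ℝ) < lam := by linarith
  have h1 : Real.sqrt (A + (t - k) ^ 2) ≤ Real.sqrt (A + t ^ 2) + k := by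
    have habs : (t - k) ^ 2 ≤ (|t| + k) ^ 2 := by
      nlinarith [abs_nonneg t, neg_abs_le t, le_abs_self t]
    calc Real.sqrt (A + (t - k) ^ 2) ≤ Real.sqrt (A + (|t| + k) ^ 2) :=
          Real.sqrt_le_sqrt (by linarith)
      _ ≤ Real.sqrt (A + |t| ^ 2) + k := sqrt_add_le hA (abs_nonneg t) hk
      _ = Real.sqrt (A + t ^ 2) + k := by rw [sq_abs]
  have hinv1 : lam⁻¹ ≤ 1 := inv_le_one_of_one_le₀ hlam
  have h2 : lam⁻¹ * Real.sqrt (A + (t - k) ^ 2) ≤ lam⁻¹ * Real.sqrt (A + t ^ 2) + k := by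
    have h3 := mul_le_mul_of_nonneg_left h1 (inv_nonneg.mpr hlam0.le)
    have h4 : lam⁻¹ * k ≤ k := by
      have := mul_le_mul_of_nonneg_right hinv1 hk
      linarith
    nlinarith
  have h5 : max (lam⁻¹ * Real.sqrt (A + (t - k) ^ 2)) c₂ ≤
      max (lam⁻¹ * Real.sqrt (A + t ^ 2)) c₂ + k := by
    apply max_le
    · exact h2.trans (by
        have := le_max_left (lam⁻¹ * Real.sqrt (A + t ^ 2)) c₂
        linarith)
    · have := le_max_right (lam⁻¹ * Real.sqrt (A + t ^ 2)) c₂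
      linarith
  linarith

/-! ### The chain/telescoping inequality -/

lemma chain {C : ℝ} (hC : 0 < C) (d : ℕ) {x c : ℝ} (hx : 0 < x) (hc : 0 ≤ c) :
    ∀ n : ℕ, 1 ≤ n → psi C d x - psi C d (x + ((n : ℝ) + c)) ≤
      ∑ t ∈ Finset.range n, (psi C d (x + t) - psi C d (x + t + (1 + c))) := by
  intro n hn
  induction n, hn using Nat.le_induction with
  | base =>
    rw [Finset.sum_range_one]
    apply le_of_eq
    norm_num
  | succ n hn ih =>
    rw [Finset.sum_range_succ]
    have hxn : (0:ℝ) < x + n := by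
      have : (0:ℝ) ≤ (n:ℝ) := Nat.cast_nonneg n
      linarith
    have e1 : x + ((↑(n + 1) : ℝ) + c) = (x + n) + (1 + c) := by push_cast; ring
    have h2 : psi C d (x + ((n:ℝ) + c)) ≤ psi C d (x + n) :=
      psi_anti hC d hxn (by linarith)
    rw [e1]
    linarith


lemma abs_le_latNorm (k : ℕ) (n : Fin k → ℤ) (i : Fin k) : |(n i : ℝ)| ≤ latNorm k n := by
  unfold latNorm
  rw [← Real.sqrt_sq_eq_abs]
  exact Real.sqrt_le_sqrt (Finset.single_le_sum (f := fun i => ((n i : ℝ)) ^ 2)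
    (fun i _ => sq_nonneg _) (Finset.mem_univ i))

lemma latNorm_nonneg (k : ℕ) (n : Fin k → ℤ) : 0 ≤ latNorm k n := Real.sqrt_nonneg _

lemma Sterm_le_sum_id {d : ℕ} {C c₁ lam c₂ : ℝ} (hC : 0 < C) (hc₁ : 0 ≤ c₁) (hlam : 1 ≤ lam)
    (hc₂ : c₁ < c₂) (hc₂def : C * (c₂ - c₁) ^ d = 1)
    (a : ℤ → ℤ) (ha : StrictMono a) (n' : Fin (d - 1) → ℤ) (j : ℤ) :
    Sterm d C c₁ lam c₂ a n' j ≤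
      ∑ m ∈ Finset.Ioc (a (j - 1)) (a j), Sterm d C c₁ lam c₂ (fun i => i) n' m := by
  have hgz : a (j - 1) < a j := ha (by omega)
  set g : ℕ := (a j - a (j - 1)).toNat with hgdef
  have hg1 : 1 ≤ g := by omega
  have hz : ((g : ℕ) : ℤ) = a j - a (j - 1) := by omega
  have hgcast : ((g : ℕ) : ℝ) = (a j : ℝ) - (a (j - 1) : ℝ) := by
    calc ((g : ℕ) : ℝ) = (((g : ℕ) : ℤ) : ℝ) := by push_cast; ring
      _ = ((a j - a (j - 1) : ℤ) : ℝ) := by rw [hz]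
      _ = (a j : ℝ) - (a (j - 1) : ℝ) := by push_cast; ring
  have hx : (0:ℝ) <
      max (lam⁻¹ * Real.sqrt ((latNorm (d - 1) n') ^ 2 + ((a j : ℝ)) ^ 2)) c₂ - c₁ := by
    have := le_max_right (lam⁻¹ * Real.sqrt ((latNorm (d - 1) n') ^ 2 + ((a j : ℝ)) ^ 2)) c₂
    linarith
  rw [Sterm_eq hC hc₁ hlam hc₂ hc₂def a n' j (by rw [← hgcast]; exact_mod_cast hg1), ← hgcast]
  refine le_trans (chain hC d hx (by linarith : (0:ℝ) ≤ 2 * c₁) g hg1) ?_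
  have himg : Finset.Ioc (a (j - 1)) (a j) =
      (Finset.range g).image (fun t : ℕ => a j - (t : ℤ)) := by
    ext m
    simp only [Finset.mem_Ioc, Finset.mem_image, Finset.mem_range]
    constructor
    · intro hm
      exact ⟨(a j - m).toNat, by omega, by omega⟩
    · rintro ⟨t, ht, rfl⟩
      omega
  rw [himg, Finset.sum_image (by intro t1 _ t2 _ h; have h' : a j - (t1:ℤ) = a j - (t2:ℤ) := h; omega)]
  apply Finset.sum_le_sum
  intro t ht
  rw [Sterm_id_eq hC hc₁ hlam hc₂ hc₂def n' (a j - (t : ℤ))]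
  have hLpos : (0:ℝ) <
      max (lam⁻¹ * Real.sqrt ((latNorm (d - 1) n') ^ 2 + (((a j - (t : ℤ) : ℤ)) : ℝ) ^ 2)) c₂
        - c₁ := by
    have := le_max_right
      (lam⁻¹ * Real.sqrt ((latNorm (d - 1) n') ^ 2 + (((a j - (t : ℤ) : ℤ)) : ℝ) ^ 2)) c₂
    linarith
  have hLle :
      max (lam⁻¹ * Real.sqrt ((latNorm (d - 1) n') ^ 2 + (((a j - (t : ℤ) : ℤ)) : ℝ) ^ 2)) c₂
        - c₁ ≤
      (max (lam⁻¹ * Real.sqrt ((latNorm (d - 1) n') ^ 2 + ((a j : ℝ)) ^ 2)) c₂ - c₁)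
        + (t : ℝ) := by
    have h := Lv_le (lam := lam) (c₂ := c₂) (c₁ := c₁) (A := (latNorm (d - 1) n') ^ 2)
      hlam (sq_nonneg _) ((a j : ℝ)) (t : ℝ) (Nat.cast_nonneg t)
    have hcast : ((a j : ℝ) - (t : ℝ)) = (((a j - (t : ℤ) : ℤ)) : ℝ) := by push_cast; ring
    rw [hcast] at h
    exact h
  exact psi_diff_anti hC d hLpos hLle (by linarith)

lemma ofReal_Sterm_le {d : ℕ} {C c₁ lam c₂ : ℝ} (hC : 0 < C) (hc₁ : 0 ≤ c₁) (hlam : 1 ≤ lam)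
    (hc₂ : c₁ < c₂) (hc₂def : C * (c₂ - c₁) ^ d = 1)
    (a : ℤ → ℤ) (ha : StrictMono a) (n' : Fin (d - 1) → ℤ) (j : ℤ) :
    ENNReal.ofReal (Sterm d C c₁ lam c₂ a n' j) ≤
      ∑ m ∈ Finset.Ioc (a (j - 1)) (a j),
        ENNReal.ofReal (Sterm d C c₁ lam c₂ (fun i => i) n' m) := by
  calc ENNReal.ofReal (Sterm d C c₁ lam c₂ a n' j)
      ≤ ENNReal.ofReal (∑ m ∈ Finset.Ioc (a (j - 1)) (a j),
          Sterm d C c₁ lam c₂ (fun i => i) n' m) :=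
        ENNReal.ofReal_le_ofReal (Sterm_le_sum_id hC hc₁ hlam hc₂ hc₂def a ha n' j)
    _ = ∑ m ∈ Finset.Ioc (a (j - 1)) (a j),
          ENNReal.ofReal (Sterm d C c₁ lam c₂ (fun i => i) n' m) :=
        ENNReal.ofReal_sum_of_nonneg fun m _ =>
          Sterm_nonneg hC hc₁ hlam hc₂ hc₂def (fun i => i) n' m (by push_cast; norm_num)

end SP

open SP in
/-- **Summability lemma (finiteness part)**: for `a_j = j` the sum `S((j))` is finite,
being bounded by `#{n ∈ ℤ^d : λ⁻¹|n| ≤ c₂}` plus a convergent tail sum; consequently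
`S((a_j)) < ∞` for every strictly increasing integer sequence `(a_j)`. -/
theorem Ssum_id_finite (d : ℕ) (hd : 1 ≤ d) (C c₁ lam c₂ : ℝ)
    (hC : 0 < C) (hc₁ : 0 ≤ c₁) (hlam : 1 ≤ lam) (hc₂ : c₁ < c₂)
    (hc₂def : C * (c₂ - c₁) ^ d = 1) :
    Ssum d C c₁ lam c₂ (fun j => j) ≤
      (∑' n : Fin d → ℤ,
        if lam⁻¹ * latNorm d n ≤ c₂ then (1 : ℝ≥0∞)
        else ENNReal.ofReal ((C * (lam⁻¹ * latNorm d n - c₁) ^ d)⁻¹ -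
          (C * (lam⁻¹ * latNorm d n + 1 + c₁) ^ d)⁻¹)) ∧
    (∑' n : Fin d → ℤ,
        if lam⁻¹ * latNorm d n ≤ c₂ then (1 : ℝ≥0∞)
        else ENNReal.ofReal ((C * (lam⁻¹ * latNorm d n - c₁) ^ d)⁻¹ -
          (C * (lam⁻¹ * latNorm d n + 1 + c₁) ^ d)⁻¹)) < ⊤ ∧
    (∀ a : ℤ → ℤ, StrictMono a → Ssum d C c₁ lam c₂ a < ⊤) := by
  obtain ⟨k, rfl⟩ : ∃ k, d = k + 1 := ⟨d - 1, by omega⟩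
  have hc₂0 : 0 < c₂ := lt_of_le_of_lt hc₁ hc₂
  have hlam0 : (0:ℝ) < lam := by linarith
  set G : (Fin (k + 1) → ℤ) → ℝ≥0∞ := fun n =>
    if lam⁻¹ * latNorm (k + 1) n ≤ c₂ then (1 : ℝ≥0∞)
    else ENNReal.ofReal ((C * (lam⁻¹ * latNorm (k + 1) n - c₁) ^ (k + 1))⁻¹ -
      (C * (lam⁻¹ * latNorm (k + 1) n + 1 + c₁) ^ (k + 1))⁻¹) with hG
  have hnorm : ∀ (n' : Fin (k + 1 - 1) → ℤ) (j : ℤ),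
      Real.sqrt ((latNorm (k + 1 - 1) n') ^ 2 + ((j : ℝ)) ^ 2) =
        latNorm (k + 1) (Fin.cons j n') := by
    intro n' j
    unfold latNorm
    rw [Real.sq_sqrt (Finset.sum_nonneg fun i _ => sq_nonneg _)]
    congr 1
    rw [Fin.sum_univ_succ]
    simp [add_comm]
  -- pointwise comparison for `a = id`
  have hpt : ∀ p : (Fin (k + 1 - 1) → ℤ) × ℤ,
      ENNReal.ofReal (Sterm (k + 1) C c₁ lam c₂ (fun j => j) p.1 p.2) ≤
        G (Fin.cons p.2 p.1) := by
    rintro ⟨n', j⟩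
    rw [Sterm_id_eq hC hc₁ hlam hc₂ hc₂def n' j]
    simp only [hG]
    rw [hnorm n' j]
    by_cases h : lam⁻¹ * latNorm (k + 1) (Fin.cons j n') ≤ c₂
    · rw [if_pos h, max_eq_right h]
      have h1 : psi C (k + 1) (c₂ - c₁) = 1 := by
        unfold psi; rw [hc₂def, inv_one]
      have h2 : 0 < psi C (k + 1) ((c₂ - c₁) + (1 + 2 * c₁)) :=
        psi_pos hC _ (by linarith)
      calc ENNReal.ofReal (psi C (k + 1) (c₂ - c₁) -
              psi C (k + 1) (c₂ - c₁ + (1 + 2 * c₁)))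
          ≤ ENNReal.ofReal 1 := ENNReal.ofReal_le_ofReal (by linarith)
        _ = 1 := ENNReal.ofReal_one
    · rw [if_neg h]
      push_neg at h
      rw [max_eq_left h.le]
      apply le_of_eq
      congr 1
      unfold psi
      rw [show lam⁻¹ * latNorm (k + 1) (Fin.cons j n') - c₁ + (1 + 2 * c₁) =
        lam⁻¹ * latNorm (k + 1) (Fin.cons j n') + 1 + c₁ by ring]
  have h1 : Ssum (k + 1) C c₁ lam c₂ (fun j => j) ≤ ∑' n : Fin (k + 1) → ℤ, G n := by
    unfold Ssum
    calc ∑' p : (Fin (k + 1 - 1) → ℤ) × ℤ,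
          ENNReal.ofReal (Sterm (k + 1) C c₁ lam c₂ (fun j => j) p.1 p.2)
        ≤ ∑' p : (Fin (k + 1 - 1) → ℤ) × ℤ, G (Fin.cons p.2 p.1) :=
          ENNReal.tsum_le_tsum hpt
      _ = ∑' n : Fin (k + 1) → ℤ, G n := by
          rw [← Equiv.tsum_eq
            (((Equiv.prodComm (Fin (k + 1 - 1) → ℤ) ℤ)).trans
              (Fin.consEquiv fun _ : Fin (k + 1) => ℤ)) G]
          apply tsum_congr
          intro p
          rfl
  have h2 : (∑' n : Fin (k + 1) → ℤ, G n) < ⊤ := by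
    set S : Set (Fin (k + 1) → ℤ) := {n | lam⁻¹ * latNorm (k + 1) n ≤ c₂} with hS
    have hhead : S.Finite := by
      apply Set.Finite.subset
        (Set.Finite.pi fun _ : Fin (k + 1) => Set.finite_Icc (-⌈lam * c₂⌉) ⌈lam * c₂⌉)
      intro n hn
      have hn' : lam⁻¹ * latNorm (k + 1) n ≤ c₂ := hn
      have hQle : latNorm (k + 1) n ≤ lam * c₂ := by
        have h := mul_le_mul_of_nonneg_left hn' hlam0.le
        rw [← mul_assoc, mul_inv_cancel₀ (ne_of_gt hlam0), one_mul] at h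
        exact h
      rw [Set.mem_univ_pi]
      intro i
      have h3 : |(n i : ℝ)| ≤ ((⌈lam * c₂⌉ : ℤ) : ℝ) :=
        ((abs_le_latNorm _ n i).trans hQle).trans (Int.le_ceil _)
      have h4 : |n i| ≤ ⌈lam * c₂⌉ := by
        have h5 : ((|n i| : ℤ) : ℝ) ≤ ((⌈lam * c₂⌉ : ℤ) : ℝ) := by
          rw [Int.cast_abs]; exact h3
        exact_mod_cast h5
      rw [Set.mem_Icc]
      exact abs_le.mp h4
    set p : ℝ := ((k : ℝ) + 2) / ((k : ℝ) + 1) with hpdef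
    have hp1 : 1 < p := by
      rw [hpdef, lt_div_iff₀ (by positivity)]
      linarith
    have hp0 : 0 ≤ p := by linarith
    set δ : ℝ := (c₂ - c₁) / ((1 + c₂) * lam) with hδ
    have hδ0 : 0 < δ := div_pos (by linarith) (by positivity)
    set K : ℝ := (1 + 2 * c₁) * (((k + 1 : ℕ)) : ℝ) * (C * δ ^ (k + 2))⁻¹ with hK
    have hK0 : 0 ≤ K := by
      apply mul_nonneg (mul_nonneg (by linarith) (by positivity))
      exact inv_nonneg.mpr (by positivity)
    have hGle : ∀ n : Fin (k + 1) → ℤ, G n ≤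
        S.indicator (fun _ => (1 : ℝ≥0∞)) n +
          ENNReal.ofReal (K * ∏ i, ((1:ℝ) + |(n i : ℝ)|) ^ (-p)) := by
      intro n
      simp only [hG]
      by_cases h : lam⁻¹ * latNorm (k + 1) n ≤ c₂
      · rw [if_pos h, Set.indicator_of_mem (show n ∈ S from h)]
        exact le_self_add
      · rw [if_neg h]
        push_neg at h
        refine le_trans (ENNReal.ofReal_le_ofReal ?_) le_add_self
        -- real tail bound
        set Q : ℝ := latNorm (k + 1) n with hQ
        have hQ0 : 0 ≤ Q := latNorm_nonneg _ _
        set r : ℝ := lam⁻¹ * Q with hrr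
        have hrc : c₂ < r := h
        have hx0 : (0:ℝ) < r - c₁ := by linarith
        have hQr : Q = lam * r := by
          rw [hrr, ← mul_assoc, mul_inv_cancel₀ (ne_of_gt hlam0), one_mul]
        set W : ℝ := ∏ i, ((1:ℝ) + |(n i : ℝ)|) with hW
        have hW1 : (1:ℝ) ≤ W := by
          rw [hW]
          calc (1:ℝ) = ∏ _i : Fin (k + 1), (1:ℝ) := by simp
            _ ≤ ∏ i, ((1:ℝ) + |(n i : ℝ)|) := by
                apply Finset.prod_le_prod (fun i _ => by norm_num)
                intro i _
                have := abs_nonneg ((n i : ℝ))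
                linarith
        have hW0 : (0:ℝ) < W := by linarith
        have hWeq : ∏ i, ((1:ℝ) + |(n i : ℝ)|) ^ (-p) = W ^ (-p) := by
          rw [hW]
          exact Real.finset_prod_rpow _ _ (fun i _ => by positivity) (-p)
        have hprodle : W ≤ (1 + Q) ^ (k + 1) := by
          calc W ≤ ∏ _i : Fin (k + 1), (1 + Q) := by
                apply Finset.prod_le_prod (fun i _ => by positivity)
                intro i _
                have := abs_le_latNorm (k + 1) n i
                rw [← hQ] at this
                linarith
            _ = (1 + Q) ^ (k + 1) := by
                rw [Finset.prod_const, Finset.card_univ, Fintype.card_fin]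
        have hrpow : W ^ p ≤ (1 + Q) ^ (k + 2) := by
          have hb0 : (0:ℝ) ≤ 1 + Q := by linarith
          have hh1 : W ^ p ≤ ((1 + Q) ^ (k + 1) : ℝ) ^ p :=
            Real.rpow_le_rpow (by linarith) hprodle hp0
          have hh2 : ((1 + Q) ^ (k + 1) : ℝ) ^ p = (1 + Q) ^ (k + 2) := by
            rw [← Real.rpow_natCast (1 + Q) (k + 1), ← Real.rpow_mul hb0]
            have : ((k + 1 : ℕ) : ℝ) * p = ((k + 2 : ℕ) : ℝ) := by
              rw [hpdef]
              push_cast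
              field_simp
            rw [this, Real.rpow_natCast]
          rwa [hh2] at hh1
        have hxQ : δ * (1 + Q) ≤ r - c₁ := by
          rw [hδ, div_mul_eq_mul_div, div_le_iff₀ (by positivity)]
          rw [hQr]
          nlinarith [mul_nonneg (sub_nonneg.mpr hlam) (sub_nonneg.mpr hc₂.le),
            mul_nonneg (mul_nonneg hc₁ hlam0.le) (by linarith : (0:ℝ) ≤ r - c₂),
            mul_nonneg hlam0.le (by linarith : (0:ℝ) ≤ r - c₂)]
        have hkey : δ ^ (k + 2) * W ^ p ≤ (r - c₁) ^ (k + 2) := by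
          calc δ ^ (k + 2) * W ^ p ≤ δ ^ (k + 2) * (1 + Q) ^ (k + 2) :=
                mul_le_mul_of_nonneg_left hrpow (by positivity)
            _ = (δ * (1 + Q)) ^ (k + 2) := (mul_pow _ _ _).symm
            _ ≤ (r - c₁) ^ (k + 2) := pow_le_pow_left₀ (by positivity) hxQ _
        have hWp0 : (0:ℝ) < W ^ p := Real.rpow_pos_of_pos hW0 p
        calc (C * (r - c₁) ^ (k + 1))⁻¹ - (C * (r + 1 + c₁) ^ (k + 1))⁻¹
            = psi C (k + 1) (r - c₁) - psi C (k + 1) ((r - c₁) + (1 + 2 * c₁)) := by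
              unfold psi
              rw [show (r - c₁) + (1 + 2 * c₁) = r + 1 + c₁ by ring]
          _ ≤ (1 + 2 * c₁) * ((k + 1 : ℕ) : ℝ) * (C * (r - c₁) ^ (k + 1 + 1))⁻¹ :=
              psi_diff_le hC (k + 1) hx0 (by linarith)
          _ ≤ (1 + 2 * c₁) * ((k + 1 : ℕ) : ℝ) * (C * (δ ^ (k + 2) * W ^ p))⁻¹ := by
              apply mul_le_mul_of_nonneg_left _ (by positivity)
              apply inv_anti₀ (by positivity)
              exact mul_le_mul_of_nonneg_left hkey hC.le
          _ = K * ∏ i, ((1:ℝ) + |(n i : ℝ)|) ^ (-p) := by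
              rw [hWeq, Real.rpow_neg hW0.le, hK]
              rw [show (C * (δ ^ (k + 2) * W ^ p))⁻¹ =
                (C * δ ^ (k + 2))⁻¹ * (W ^ p)⁻¹ by rw [← mul_assoc, mul_inv]]
              rw [← mul_assoc]
    have hsummK : Summable fun n : Fin (k + 1) → ℤ =>
        K * ∏ i, ((1:ℝ) + |(n i : ℝ)|) ^ (-p) :=
      (summable_prod_pow hp1 (k + 1)).mul_left K
    calc ∑' n : Fin (k + 1) → ℤ, G n
        ≤ ∑' n : Fin (k + 1) → ℤ, (S.indicator (fun _ => (1 : ℝ≥0∞)) n +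
            ENNReal.ofReal (K * ∏ i, ((1:ℝ) + |(n i : ℝ)|) ^ (-p))) :=
          ENNReal.tsum_le_tsum hGle
      _ = (∑' n : Fin (k + 1) → ℤ, S.indicator (fun _ => (1 : ℝ≥0∞)) n) +
            ∑' n : Fin (k + 1) → ℤ, ENNReal.ofReal (K * ∏ i, ((1:ℝ) + |(n i : ℝ)|) ^ (-p)) :=
          ENNReal.tsum_add
      _ < ⊤ := by
          apply ENNReal.add_lt_top.mpr
          constructor
          · rw [← tsum_subtype]
            haveI := hhead.fintype
            rw [tsum_fintype]
            simp
          · rw [← ENNReal.ofReal_tsum_of_nonneg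
              (fun n => mul_nonneg hK0 (Finset.prod_nonneg fun i _ =>
                Real.rpow_nonneg (by positivity) _)) hsummK]
            exact ENNReal.ofReal_lt_top
  refine ⟨h1, h2, ?_⟩
  intro a ha
  have hpt3 : ∀ p : (Fin (k + 1 - 1) → ℤ) × ℤ,
      ENNReal.ofReal (Sterm (k + 1) C c₁ lam c₂ a p.1 p.2) ≤
        ∑ m ∈ Finset.Ioc (a (p.2 - 1)) (a p.2),
          ENNReal.ofReal (Sterm (k + 1) C c₁ lam c₂ (fun i => i) p.1 m) :=
    fun p => ofReal_Sterm_le hC hc₁ hlam hc₂ hc₂def a ha p.1 p.2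
  have hinj : Function.Injective
      (fun σ : (Σ p : (Fin (k + 1 - 1) → ℤ) × ℤ,
          {m : ℤ // m ∈ Finset.Ioc (a (p.2 - 1)) (a p.2)}) =>
        ((σ.1.1, (σ.2 : ℤ)) : (Fin (k + 1 - 1) → ℤ) × ℤ)) := by
    rintro ⟨⟨n1, j1⟩, m1, hm1⟩ ⟨⟨n2, j2⟩, m2, hm2⟩ hEq
    simp only [Prod.mk.injEq] at hEq
    dsimp only at hm1 hm2
    obtain ⟨hn, hm⟩ := hEq
    rw [Finset.mem_Ioc] at hm1 hm2
    have hj : j1 = j2 := by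
      by_contra hne
      rcases lt_or_gt_of_ne hne with hlt | hlt
      · have : a j1 ≤ a (j2 - 1) := ha.monotone (by omega)
        omega
      · have : a j2 ≤ a (j1 - 1) := ha.monotone (by omega)
        omega
    subst hj
    subst hn
    subst hm
    rfl
  have hfin : Ssum (k + 1) C c₁ lam c₂ a ≤ Ssum (k + 1) C c₁ lam c₂ (fun j => j) := by
    unfold Ssum
    calc ∑' p : (Fin (k + 1 - 1) → ℤ) × ℤ,
          ENNReal.ofReal (Sterm (k + 1) C c₁ lam c₂ a p.1 p.2)
        ≤ ∑' p : (Fin (k + 1 - 1) → ℤ) × ℤ,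
            ∑ m ∈ Finset.Ioc (a (p.2 - 1)) (a p.2),
              ENNReal.ofReal (Sterm (k + 1) C c₁ lam c₂ (fun i => i) p.1 m) :=
          ENNReal.tsum_le_tsum hpt3
      _ = ∑' p : (Fin (k + 1 - 1) → ℤ) × ℤ,
            ∑' m : {m : ℤ // m ∈ Finset.Ioc (a (p.2 - 1)) (a p.2)},
              ENNReal.ofReal (Sterm (k + 1) C c₁ lam c₂ (fun i => i) p.1 (m : ℤ)) := by
          apply tsum_congr
          intro p
          exact (Finset.tsum_subtype _ _).symm
      _ = ∑' σ : (Σ p : (Fin (k + 1 - 1) → ℤ) × ℤ,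
            {m : ℤ // m ∈ Finset.Ioc (a (p.2 - 1)) (a p.2)}),
              ENNReal.ofReal (Sterm (k + 1) C c₁ lam c₂ (fun i => i) σ.1.1 (σ.2 : ℤ)) :=
          (ENNReal.tsum_sigma'
            (fun σ : (Σ p : (Fin (k + 1 - 1) → ℤ) × ℤ,
                {m : ℤ // m ∈ Finset.Ioc (a (p.2 - 1)) (a p.2)}) =>
              ENNReal.ofReal
                (Sterm (k + 1) C c₁ lam c₂ (fun i => i) σ.1.1 (σ.2 : ℤ)))).symm
      _ ≤ ∑' q : (Fin (k + 1 - 1) → ℤ) × ℤ,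
            ENNReal.ofReal (Sterm (k + 1) C c₁ lam c₂ (fun i => i) q.1 q.2) :=
          ENNReal.tsum_comp_le_tsum_of_injective hinj
            (fun q => ENNReal.ofReal (Sterm (k + 1) C c₁ lam c₂ (fun i => i) q.1 q.2))
  exact lt_of_le_of_lt (hfin.trans h1) h2

end
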